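/- Existence of the per-unit-loss time density (Proposition 1): Suppose each training round with the given sparsity parameter k takes a fixed time γ_k > 0, and the end-of-round loss L is a differentiable, strictly monotonically increasing function of the start-of-round loss L' with dL/dL' > 0. Then there exists a function t̃(k, ·) : (L*, L_0] -> R such that for any round starting at loss L' and ending at loss L = L(L'), one has γ_k = ∫_L^{L'} t̃(k, l) dl. Moreover t̃ satisfies the functional relation t̃(k, L(L')) = t̃(k, L')·(dL'/dL). -/

import Mathlib

open intervalIntegral

theorem time_density_exists
    (Lstar L0 : ℝ) (hL : Lstar < L0)
    (Lf : ℝ → ℝ) (γ : ℝ) (hγ : 0 < γ)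
    (hLf_mem : ∀ L' ∈ Set.Ioc Lstar L0, Lf L' ∈ Set.Ioc Lstar L0)
    (hLf_lt : ∀ L' ∈ Set.Ioc Lstar L0, Lf L' < L')
    (hLf_diff : ∀ L' ∈ Set.Ioc Lstar L0, DifferentiableAt ℝ Lf L')
    (hLf_deriv_pos : ∀ L' ∈ Set.Ioc Lstar L0, 0 < deriv Lf L') :
    ∃ t : ℝ → ℝ,
      (∀ L' ∈ Set.Ioc Lstar L0, ∫ l in (Lf L')..L', t l = γ) ∧
      (∀ L' ∈ Set.Ioc Lstar L0, t (Lf L') * deriv Lf L' = t L') := by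
  classical
  set S := Set.Ioc Lstar L0 with hSdef
  have hmono : StrictMonoOn Lf S := by
    apply strictMonoOn_of_deriv_pos (convex_Ioc _ _)
    · intro x hx
      exact (hLf_diff x hx).continuousAt.continuousWithinAt
    · intro x hx
      rw [interior_Ioc] at hx
      exact hLf_deriv_pos x (Set.Ioo_subset_Ioc_self hx)
  have hinj : Set.InjOn Lf S := hmono.injOn
  set a : ℕ → ℝ := fun n => Lf^[n] L0 with hadef
  have ha0 : a 0 = L0 := rfl
  have hasucc : ∀ n, a (n + 1) = Lf (a n) := fun n =>
    Function.iterate_succ_apply' Lf n L0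
  have hamem : ∀ n, a n ∈ S := by
    intro n
    induction n with
    | zero => exact ⟨hL, le_refl _⟩
    | succ n ih => rw [hasucc]; exact hLf_mem _ ih
  have hadec : ∀ n, a (n + 1) < a n := fun n => by
    rw [hasucc]; exact hLf_lt _ (hamem n)
  have haanti : StrictAnti a := strictAnti_nat_of_succ_lt hadec
  -- every point of S lies above some a (n+1)
  have hexists : ∀ x ∈ S, ∃ n, a (n + 1) < x := by
    intro x hx
    by_contra hcon
    push_neg at hcon
    have hbdd : BddBelow (Set.range a) :=
      ⟨Lstar, by rintro _ ⟨n, rfl⟩; exact le_of_lt (hamem n).1⟩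
    have htend : Filter.Tendsto a Filter.atTop (nhds (⨅ n, a n)) :=
      tendsto_atTop_ciInf haanti.antitone hbdd
    set c := ⨅ n, a n with hc
    have hcx : x ≤ c := by
      apply le_ciInf
      intro n
      cases n with
      | zero => exact hx.2
      | succ n => exact hcon n
    have hcS : c ∈ S := ⟨lt_of_lt_of_le hx.1 hcx, (ciInf_le hbdd 0).trans_eq ha0⟩
    have hcont : ContinuousAt Lf c := (hLf_diff c hcS).continuousAt
    have h1 : Filter.Tendsto (fun n => a (n + 1)) Filter.atTop (nhds (Lf c)) := by
      have h := hcont.tendsto.comp htend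
      have : (fun n => a (n + 1)) = (Lf ∘ a) := by
        funext n; rw [hasucc n]; rfl
      rw [this]; exact h
    have h2 : Filter.Tendsto (fun n => a (n + 1)) Filter.atTop (nhds c) :=
      htend.comp (Filter.tendsto_add_atTop_nat 1)
    exact absurd (tendsto_nhds_unique h1 h2) (ne_of_lt (hLf_lt c hcS))
  -- index function characterization
  have hidx : ∀ x ∈ S, ∃ m, a (m + 1) < x ∧ x ≤ a m := by
    intro x hx
    obtain ⟨m₀, hm₀⟩ := hexists x hx
    have hex : ∃ n, a (n + 1) < x := ⟨m₀, hm₀⟩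
    refine ⟨Nat.find hex, Nat.find_spec hex, ?_⟩
    rcases h : Nat.find hex with _ | k
    · exact hx.2
    · have hk : k < Nat.find hex := by omega
      have := Nat.find_min hex hk
      exact not_lt.mp this
  set c0 : ℝ := γ / (a 0 - a 1) with hc0
  set iv : ℝ → ℝ := Function.invFunOn Lf S with hiv
  set T : ℕ → ℝ → ℝ := fun n =>
    Nat.rec (fun _ => c0) (fun _ Tn x => Tn (iv x) * (deriv Lf (iv x))⁻¹) n with hT
  have hT0 : ∀ x, T 0 x = c0 := fun _ => rfl
  have hTs : ∀ n x, T (n + 1) x = T n (iv x) * (deriv Lf (iv x))⁻¹ := fun _ _ => rfl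
  set t : ℝ → ℝ := fun x =>
    if h : ∃ n, a (n + 1) < x then T (Nat.find h) x else 0 with htdef
  -- value of t on the fundamental intervals
  have hval : ∀ m x, a (m + 1) < x → x ≤ a m → t x = T m x := by
    intro m x h1 h2
    have hex : ∃ n, a (n + 1) < x := ⟨m, h1⟩
    have hfind : Nat.find hex = m := by
      apply le_antisymm (Nat.find_le h1)
      by_contra hlt
      push_neg at hlt
      have hspec := Nat.find_spec hex
      have : a m ≤ a (Nat.find hex + 1) := haanti.antitone (Nat.succ_le_of_lt hlt)
      linarith
    simp only [htdef]
    rw [dif_pos hex, hfind]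
  -- functional equation
  have hfe : ∀ x ∈ S, t (Lf x) * deriv Lf x = t x := by
    intro x hx
    obtain ⟨m, h1, h2⟩ := hidx x hx
    have hd : deriv Lf x ≠ 0 := ne_of_gt (hLf_deriv_pos x hx)
    have hb1 : a (m + 2) < Lf x := by
      have := hmono (hamem (m + 1)) hx h1
      rwa [← hasucc (m + 1)] at this
    have hb2 : Lf x ≤ a (m + 1) := by
      rcases eq_or_lt_of_le h2 with h | h
      · rw [h, hasucc]
      · rw [hasucc]
        exact le_of_lt (hmono hx (hamem m) h)
    have hivx : iv (Lf x) = x := hinj.leftInvOn_invFunOn hx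
    rw [hval (m + 1) (Lf x) hb1 hb2, hTs, hivx, hval m x h1 h2]
    field_simp
  -- substitution lemma
  have hsub : ∀ p q, p ∈ S → q ∈ S → p ≤ q →
      (MeasureTheory.IntegrableOn t (Set.Ioc p q) →
        MeasureTheory.IntegrableOn t (Set.Ioc (Lf p) (Lf q))) ∧
      (∫ x in Set.Ioc (Lf p) (Lf q), t x) = ∫ x in Set.Ioc p q, t x := by
    intro p q hp hq hpq
    have hsS : Set.Ioc p q ⊆ S := fun x hx =>
      ⟨lt_trans hp.1 hx.1, hx.2.trans hq.2⟩
    have himg : Lf '' Set.Ioc p q = Set.Ioc (Lf p) (Lf q) := by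
      apply Set.Subset.antisymm
      · rintro _ ⟨x, hx, rfl⟩
        refine ⟨hmono hp (hsS hx) hx.1, ?_⟩
        rcases eq_or_lt_of_le hx.2 with h | h
        · rw [h]
        · exact le_of_lt (hmono (hsS hx) hq h)
      · rintro y ⟨hy1, hy2⟩
        have hcont : ContinuousOn Lf (Set.Icc p q) := fun x hx =>
          (hLf_diff x ⟨lt_of_lt_of_le hp.1 hx.1, hx.2.trans hq.2⟩).continuousAt.continuousWithinAt
        obtain ⟨x, hx, hfx⟩ := intermediate_value_Icc hpq hcont ⟨le_of_lt hy1, hy2⟩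
        refine ⟨x, ⟨?_, hx.2⟩, hfx⟩
        rcases eq_or_lt_of_le hx.1 with h | h
        · exfalso; rw [h, hfx] at hy1; exact lt_irrefl _ hy1
        · exact h
    have hms : MeasurableSet (Set.Ioc p q) := measurableSet_Ioc
    have hf' : ∀ x ∈ Set.Ioc p q,
        HasDerivWithinAt Lf (deriv Lf x) (Set.Ioc p q) x := fun x hx =>
      ((hLf_diff x (hsS hx)).hasDerivAt).hasDerivWithinAt
    have hinj' : Set.InjOn Lf (Set.Ioc p q) := hinj.mono hsS
    have heqon : Set.EqOn (fun x => |deriv Lf x| • t (Lf x)) t (Set.Ioc p q) := by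
      intro x hx
      have hxS := hsS hx
      simp only [smul_eq_mul, abs_of_pos (hLf_deriv_pos x hxS)]
      rw [mul_comm]
      exact hfe x hxS
    constructor
    · intro hint
      rw [← himg]
      rw [MeasureTheory.integrableOn_image_iff_integrableOn_abs_deriv_smul hms hf' hinj' t]
      exact (hint.congr_fun heqon.symm hms)
    · rw [← himg,
        MeasureTheory.integral_image_eq_integral_abs_deriv_smul hms hf' hinj' t]
      exact MeasureTheory.setIntegral_congr_fun hms heqon
  -- integrability and value on each fundamental interval
  have hIn : ∀ n, MeasureTheory.IntegrableOn t (Set.Ioc (a (n + 1)) (a n)) ∧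
      (∫ x in Set.Ioc (a (n + 1)) (a n), t x) = γ := by
    intro n
    induction n with
    | zero =>
      have heq : Set.EqOn t (fun _ => c0) (Set.Ioc (a 1) (a 0)) := fun x hx =>
        by rw [hval 0 x hx.1 hx.2, hT0]
      have hvol : (MeasureTheory.volume (Set.Ioc (a 1) (a 0))).toReal = a 0 - a 1 := by
        rw [Real.volume_Ioc, ENNReal.toReal_ofReal (by linarith [hadec 0])]
      constructor
      · refine MeasureTheory.IntegrableOn.congr_fun ?_ heq.symm measurableSet_Ioc
        refine MeasureTheory.integrableOn_const ?_
        rw [Real.volume_Ioc]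
        exact ENNReal.ofReal_ne_top
      · rw [MeasureTheory.setIntegral_congr_fun measurableSet_Ioc heq,
          MeasureTheory.setIntegral_const, MeasureTheory.measureReal_def, hvol, hc0, smul_eq_mul]
        field_simp [ne_of_gt (sub_pos.2 (hadec 0))]
    | succ n ih =>
      have h := hsub (a (n + 1)) (a n) (hamem (n + 1)) (hamem n) (le_of_lt (hadec n))
      have himg2 : Set.Ioc (Lf (a (n + 1))) (Lf (a n)) = Set.Ioc (a (n + 2)) (a (n + 1)) := by
        rw [← hasucc, ← hasucc]
      constructor
      · have := h.1 ih.1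
        rwa [himg2] at this
      · have := h.2
        rw [himg2] at this
        rw [this, ih.2]
  refine ⟨t, ?_, ?_⟩
  · intro L' hL'
    obtain ⟨m, h1, h2⟩ := hidx L' hL'
    have hb1 : a (m + 2) < Lf L' := by
      have := hmono (hamem (m + 1)) hL' h1
      rwa [← hasucc (m + 1)] at this
    have hb2 : Lf L' ≤ a (m + 1) := by
      rcases eq_or_lt_of_le h2 with h | h
      · rw [h, hasucc]
      · rw [hasucc]
        exact le_of_lt (hmono hL' (hamem m) h)
    have hI1 : MeasureTheory.IntegrableOn t (Set.Ioc (Lf L') (a (m + 1))) :=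
      (hIn (m + 1)).1.mono_set (Set.Ioc_subset_Ioc (le_of_lt hb1) le_rfl)
    have hI2 : MeasureTheory.IntegrableOn t (Set.Ioc (a (m + 1)) L') :=
      (hIn m).1.mono_set (Set.Ioc_subset_Ioc le_rfl h2)
    have hI3 : MeasureTheory.IntegrableOn t (Set.Ioc L' (a m)) :=
      (hIn m).1.mono_set (Set.Ioc_subset_Ioc (le_of_lt h1) le_rfl)
    -- change of variables: ∫ over Ioc (Lf L') (a (m+1)) = ∫ over Ioc L' (a m)
    have hcv : (∫ x in Set.Ioc (Lf L') (a (m + 1)), t x) = ∫ x in Set.Ioc L' (a m), t x := by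
      have h := (hsub L' (a m) hL' (hamem m) h2).2
      rwa [← hasucc m] at h
    -- split Ioc (a (m+1)) (a m) at L'
    have hsplit1 : (∫ x in Set.Ioc (a (m + 1)) (a m), t x) =
        (∫ x in Set.Ioc (a (m + 1)) L', t x) + ∫ x in Set.Ioc L' (a m), t x := by
      rw [← MeasureTheory.setIntegral_union]
      · rw [Set.Ioc_union_Ioc_eq_Ioc (le_of_lt h1) h2]
      · rw [Set.Ioc_disjoint_Ioc]
        simp
      · exact measurableSet_Ioc
      · exact hI2
      · exact hI3
    -- split Ioc (Lf L') L' at a (m+1)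
    have hsplit2 : (∫ x in Set.Ioc (Lf L') L', t x) =
        (∫ x in Set.Ioc (Lf L') (a (m + 1)), t x) + ∫ x in Set.Ioc (a (m + 1)) L', t x := by
      rw [← MeasureTheory.setIntegral_union]
      · rw [Set.Ioc_union_Ioc_eq_Ioc hb2 (le_of_lt h1)]
      · rw [Set.Ioc_disjoint_Ioc]
        simp
      · exact measurableSet_Ioc
      · exact hI1
      · exact hI2
    have hγeq := (hIn m).2
    rw [intervalIntegral.integral_of_le (le_of_lt (hLf_lt L' hL'))]
    rw [hsplit2, hcv]
    linarith [hsplit1, hγeq]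
  · intro L' hL'
    exact hfe L' hL'
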